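/- Suppose there exist class K∞ functions α₁, α₂, a class K function σ, and κ > 0 such that along any pair of trajectories x, x̃ (with states x(t), x̃(t) ∈ ℝⁿ, history segments x_t, x̃_t, and inputs u, ũ), a continuous functional V satisfies α₁(|x(t) − x̃(t)|) ≤ V(x_t, x̃_t) ≤ α₂(‖x_t − x̃_t‖) and D⁺V(x_t, x̃_t) ≤ -κ V(x_t, x̃_t) + σ(‖u − ũ‖_{[0,t]}) for all t ≥ 0. Then |x(t) − x̃(t)| ≤ β(‖x₀ − x̃₀‖, t) + γ(‖u − ũ‖_{[0,t]}) for all t ≥ 0, where β(r,t) = α₁⁻¹(2 e^{-κ t} α₂(r)) and γ(r) = α₁⁻¹((2/κ) σ(r)). -/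

import Mathlib

open Set Filter

theorem fence_aux {f : ℝ → ℝ} {a b : ℝ}
    (hf : ContinuousOn f (Icc a b))
    {B B' : ℝ → ℝ} (ha : f a ≤ B a) (hB : ContinuousOn B (Icc a b))
    (hB' : ∀ x ∈ Ico a b, HasDerivWithinAt B (B' x) (Ici x) x)
    (bound : ∀ x ∈ Ico a b, f x = B x →
      ∃ r < B' x, ∃ᶠ z in nhdsWithin x (Ioi x), slope f x z < r) :
    ∀ ⦃x⦄, x ∈ Icc a b → f x ≤ B x := by
  change Icc a b ⊆ { x | f x ≤ B x }
  set s := { x | f x ≤ B x } ∩ Icc a b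
  have A : ContinuousOn (fun x => (f x, B x)) (Icc a b) := hf.prodMk hB
  have : IsClosed s := by
    simp only [s, inter_comm]
    exact A.preimage_isClosed_of_isClosed isClosed_Icc OrderClosedTopology.isClosed_le'
  apply this.Icc_subset_of_forall_exists_gt ha
  rintro x ⟨hxB : f x ≤ B x, xab⟩ y hy
  cases' hxB.lt_or_eq with hxB hxB
  · refine nonempty_of_mem (inter_mem ?_ (Ioc_mem_nhdsGT_of_mem ⟨le_rfl, hy⟩))
    have : ∀ᶠ x in nhdsWithin x (Icc a b), f x < B x :=
      A x (Ico_subset_Icc_self xab) (IsOpen.mem_nhds (isOpen_lt continuous_fst continuous_snd) hxB)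
    have : ∀ᶠ x in nhdsWithin x (Ioi x), f x < B x :=
      nhdsWithin_le_of_mem (Icc_mem_nhdsGT_of_mem xab) this
    exact this.mono fun y => le_of_lt
  · obtain ⟨r, hrB, hf'⟩ := bound x xab hxB
    have HB : ∀ᶠ z in nhdsWithin x (Ioi x), r < slope B x z :=
      (hasDerivWithinAt_iff_tendsto_slope' <| lt_irrefl x).1 (hB' x xab).Ioi_of_Ici
        (Ioi_mem_nhds hrB)
    obtain ⟨z, hfz, hzB, hz⟩ : ∃ z, slope f x z < r ∧ r < slope B x z ∧ z ∈ Ioc x y :=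
      (hf'.and_eventually (HB.and (Ioc_mem_nhdsGT_of_mem ⟨le_rfl, hy⟩))).exists
    refine ⟨z, ?_, hz⟩
    have := (hfz.trans hzB).le
    rwa [slope_def_field, slope_def_field, div_le_div_iff_of_pos_right (sub_pos.2 hz.1), hxB,
      sub_le_sub_iff_right] at this

theorem freq_slope_aux {v : ℝ → ℝ} {x r : ℝ}
    (h : ∀ᶠ h in nhdsWithin (0:ℝ) (Ioi 0), (v (x + h) - v x) / h < r) :
    ∃ᶠ z in nhdsWithin x (Ioi x), slope v x z < r := by
  obtain ⟨u, hu, hsub⟩ := mem_nhdsGT_iff_exists_Ioo_subset.1 h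
  have hu0 : (0:ℝ) < u := hu
  have hev : ∀ᶠ z in nhdsWithin x (Ioi x), slope v x z < r := by
    filter_upwards [Ioo_mem_nhdsGT_of_mem (⟨le_rfl, by linarith⟩ : x ∈ Ico x (x + u))]
      with z hz
    have h1 : z - x ∈ Ioo (0:ℝ) u := ⟨by linarith [hz.1], by linarith [hz.2]⟩
    have := hsub h1
    simp only [mem_setOf_eq] at this
    rw [slope_def_field]
    simpa using this
  exact hev.frequently

theorem limsup_unbdd_aux {s : ℝ → ℝ} {f : Filter ℝ}
    (h : ¬ IsBoundedUnder (· ≤ ·) f s) : limsup s f = 0 := by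
  rw [Filter.limsup_eq]
  rw [← Real.sInf_empty]; congr 1
  ext a
  simp only [mem_setOf_eq, mem_empty_iff_false, iff_false]
  intro ha
  exact h ⟨a, ha⟩


/-- δISS theorem: if a continuous Lyapunov–Krasovskii-type functional along a pair
of trajectories, abstracted as `v(t) = V(x_t, x̃_t)`, satisfies the sandwich bound
`α₁(‖x(t) − x̃(t)‖) ≤ v(t)`, `v(0) ≤ α₂(‖x₀ − x̃₀‖)` and the dissipation inequality
`D⁺v(t) ≤ -κ v(t) + σ(‖u − ũ‖_{[0,t]})`, with `α₁, α₂` of class K∞ and `σ` of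
class K, then `‖x(t) − x̃(t)‖ ≤ β(‖x₀ − x̃₀‖, t) + γ(‖u − ũ‖_{[0,t]})` with
`β(r,t) = α₁⁻¹(2 e^{-κ t} α₂ r)` and `γ(r) = α₁⁻¹((2/κ) σ r)`.
Here `d₀` stands for `‖x₀ − x̃₀‖` and `U t` stands for `‖u − ũ‖_{[0,t]}`. -/
theorem deltaISS_of_LKF
    {n : ℕ} (x xt : ℝ → EuclideanSpace ℝ (Fin n))
    (v : ℝ → ℝ) (d₀ : ℝ) (U : ℝ → ℝ)
    (α₁ α₂ σ α₁inv : ℝ → ℝ) (κ : ℝ) (hκ : 0 < κ)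
    -- α₁ is of class K∞, with inverse α₁inv on [0,∞)
    (hα₁cont : ContinuousOn α₁ (Ici 0))
    (hα₁mono : StrictMonoOn α₁ (Ici 0))
    (hα₁0 : α₁ 0 = 0)
    (hα₁top : Tendsto α₁ atTop atTop)
    (hinv₁ : ∀ r ∈ Ici (0:ℝ), α₁inv (α₁ r) = r)
    (hinv₂ : ∀ s ∈ Ici (0:ℝ), α₁ (α₁inv s) = s)
    (hinv₃ : Set.MapsTo α₁inv (Ici 0) (Ici 0))
    -- α₂ is of class K∞
    (hα₂cont : ContinuousOn α₂ (Ici 0))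
    (hα₂mono : StrictMonoOn α₂ (Ici 0))
    (hα₂0 : α₂ 0 = 0)
    (hα₂top : Tendsto α₂ atTop atTop)
    -- σ is of class K
    (hσcont : ContinuousOn σ (Ici 0))
    (hσmono : StrictMonoOn σ (Ici 0))
    (hσ0 : σ 0 = 0)
    -- data: d₀ = ‖x₀ − x̃₀‖ ≥ 0, U t = ‖u − ũ‖_{[0,t]} nonneg and nondecreasing
    (hd₀ : 0 ≤ d₀)
    (hU : ∀ t ∈ Ici (0:ℝ), 0 ≤ U t)
    (hUmono : MonotoneOn U (Ici 0))
    -- v is continuous and satisfies the sandwich and dissipation inequalities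
    (hvcont : ContinuousOn v (Ici 0))
    (hsand : ∀ t ∈ Ici (0:ℝ), α₁ ‖x t - xt t‖ ≤ v t)
    (hv0 : v 0 ≤ α₂ d₀)
    (hdini : ∀ t ∈ Ici (0:ℝ),
      Filter.limsup (fun h : ℝ => (v (t + h) - v t) / h) (nhdsWithin 0 (Ioi 0))
        ≤ -κ * v t + σ (U t)) :
    ∀ t ∈ Ici (0:ℝ),
      ‖x t - xt t‖ ≤ α₁inv (2 * Real.exp (-κ * t) * α₂ d₀)
        + α₁inv (2 / κ * σ (U t)) := by
  -- basic positivity facts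
  have hα₂d₀ : 0 ≤ α₂ d₀ := by
    have := hα₂mono.monotoneOn (self_mem_Ici) hd₀ hd₀
    simpa [hα₂0] using this
  have hσnonneg : ∀ t ∈ Ici (0:ℝ), 0 ≤ σ (U t) := by
    intro t ht
    have hUt := hU t ht
    have := hσmono.monotoneOn (self_mem_Ici) hUt hUt
    simpa [hσ0] using this
  -- monotonicity of α₁inv on [0,∞)
  have hinvmono : ∀ s₁ ∈ Ici (0:ℝ), ∀ s₂ ∈ Ici (0:ℝ), s₁ ≤ s₂ → α₁inv s₁ ≤ α₁inv s₂ := by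
    intro s₁ h₁ s₂ h₂ hle
    by_contra hlt
    push_neg at hlt
    have := hα₁mono (hinv₃ h₂) (hinv₃ h₁) hlt
    rw [hinv₂ s₁ h₁, hinv₂ s₂ h₂] at this
    linarith
  -- main Gronwall-type bound
  have key : ∀ T ∈ Ici (0:ℝ), v T ≤ Real.exp (-κ * T) * α₂ d₀ + σ (U T) / κ := by
    intro T hT
    have hT0 : (0:ℝ) ≤ T := hT
    have hσT : 0 ≤ σ (U T) := hσnonneg T hT
    refine le_of_forall_pos_le_add ?_
    intro ε' hε'
    -- it suffices to show v T ≤ exp(-κT)α₂d₀ + (σ(U T) + ε)/κ for ε := κ ε'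
    set ε := κ * ε' with hεdef
    have hε : 0 < ε := mul_pos hκ hε'
    have goal2 : v T ≤ Real.exp (-κ * T) * α₂ d₀ + (σ (U T) + ε) / κ := by
      set C := (σ (U T) + ε) / κ with hC
      have hCpos : 0 < C := div_pos (by linarith) hκ
      set B : ℝ → ℝ := fun t => Real.exp (-κ * t) * α₂ d₀ + C with hBdef
      set B' : ℝ → ℝ := fun t => (-κ * Real.exp (-κ * t)) * α₂ d₀ with hB'def
      have hBderiv : ∀ t : ℝ, HasDerivAt B (B' t) t := by
        intro t
        have h1 : HasDerivAt (fun t : ℝ => -κ * t) (-κ) t := by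
          simpa using (hasDerivAt_id t).const_mul (-κ)
        have h2 := h1.exp
        simpa [hBdef, hB'def, mul_comm] using (h2.mul_const (α₂ d₀)).add_const C
      have hfence : ∀ ⦃s⦄, s ∈ Icc 0 T → v s ≤ B s := by
        apply fence_aux (hvcont.mono (Icc_subset_Ici_self))
        · -- v 0 ≤ B 0
          simp only [hBdef]
          simp only [mul_zero, Real.exp_zero, one_mul]
          linarith
        · exact ((Real.continuous_exp.comp (continuous_const.mul continuous_id)).mul
            continuous_const).add continuous_const |>.continuousOn
        · intro s _; exact (hBderiv s).hasDerivWithinAt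
        · -- contact points
          intro s hs hcontact
          have hs0 : (0:ℝ) ≤ s := hs.1
          have hsT : s ≤ T := hs.2.le
          have hσs : σ (U s) ≤ σ (U T) := by
            rcases eq_or_lt_of_le ((hUmono hs0 hT0 hsT)) with h | h
            · rw [h]
            · exact (hσmono (hU s hs0) (hU T hT0) h).le
          have hB's : B' s = -κ * B s + σ (U T) + ε := by
            simp only [hB'def, hBdef, hC]
            field_simp
            ring
          have hdini' := hdini s hs0
          by_cases hbdd : IsBoundedUnder (· ≤ ·) (nhdsWithin (0:ℝ) (Ioi 0))
              (fun h : ℝ => (v (s + h) - v s) / h)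
          · refine ⟨-κ * v s + σ (U T) + ε / 2, ?_, ?_⟩
            · rw [hB's, hcontact]; linarith
            · apply freq_slope_aux
              apply eventually_lt_of_limsup_lt _ hbdd
              calc limsup (fun h : ℝ => (v (s + h) - v s) / h) (nhdsWithin 0 (Ioi 0))
                  ≤ -κ * v s + σ (U s) := hdini'
                _ < -κ * v s + σ (U T) + ε / 2 := by linarith
          · exfalso
            rw [limsup_unbdd_aux hbdd] at hdini'
            -- 0 ≤ -κ v s + σ(U s), so κ v s ≤ σ(U T); but v s = B s ≥ C > σ(U T)/κ
            have h1 : κ * v s ≤ σ (U T) := by linarith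
            have h2 : C ≤ B s := by
              simp only [hBdef]
              have : 0 ≤ Real.exp (-κ * s) * α₂ d₀ :=
                mul_nonneg (Real.exp_nonneg _) hα₂d₀
              linarith
            have h3 : σ (U T) + ε ≤ κ * B s := by
              calc σ (U T) + ε = κ * ((σ (U T) + ε) / κ) := by field_simp
                _ ≤ κ * B s := mul_le_mul_of_nonneg_left (hC ▸ h2) hκ.le
            rw [← hcontact] at h3
            linarith
      have := hfence (right_mem_Icc.2 hT0)
      simpa [hBdef, hC] using this
    calc v T ≤ Real.exp (-κ * T) * α₂ d₀ + (σ (U T) + ε) / κ := goal2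
      _ = Real.exp (-κ * T) * α₂ d₀ + σ (U T) / κ + ε' := by
          rw [hεdef]; field_simp; ring
  -- conclude
  intro t ht
  have ht0 : (0:ℝ) ≤ t := ht
  set a := Real.exp (-κ * t) * α₂ d₀ with hadef
  set b := σ (U t) / κ with hbdef
  have ha0 : 0 ≤ a := mul_nonneg (Real.exp_nonneg _) hα₂d₀
  have hb0 : 0 ≤ b := div_nonneg (hσnonneg t ht) hκ.le
  have hchain : α₁ ‖x t - xt t‖ ≤ a + b := le_trans (hsand t ht) (key t ht)
  have hcmax : a + b ≤ max (2 * a) (2 * b) := by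
    rcases le_total a b with h | h
    · calc a + b ≤ 2 * b := by linarith
        _ ≤ _ := le_max_right _ _
    · calc a + b ≤ 2 * a := by linarith
        _ ≤ _ := le_max_left _ _
  set c := max (2 * a) (2 * b) with hcdef
  have hc0 : (0:ℝ) ≤ c := le_trans (by linarith) (le_max_left _ _)
  have hnorm : ‖x t - xt t‖ ≤ α₁inv c := by
    by_contra hlt
    push_neg at hlt
    have h1 : α₁ (α₁inv c) < α₁ ‖x t - xt t‖ :=
      hα₁mono (hinv₃ hc0) (norm_nonneg _) hlt
    rw [hinv₂ c hc0] at h1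
    have : α₁ ‖x t - xt t‖ ≤ c := le_trans hchain hcmax
    linarith
  have h2a : (0:ℝ) ≤ 2 * a := by linarith
  have h2b : (0:ℝ) ≤ 2 * b := by linarith
  have hsplit : α₁inv c ≤ α₁inv (2 * a) + α₁inv (2 * b) := by
    rcases max_cases (2 * a) (2 * b) with ⟨heq, _⟩ | ⟨heq, _⟩
    · rw [hcdef, heq]
      have := mem_Ici.1 (hinv₃ h2b)
      linarith
    · rw [hcdef, heq]
      have := mem_Ici.1 (hinv₃ h2a)
      linarith
  have hfin : ‖x t - xt t‖ ≤ α₁inv (2 * a) + α₁inv (2 * b) := le_trans hnorm hsplit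
  have he1 : 2 * a = 2 * Real.exp (-κ * t) * α₂ d₀ := by rw [hadef]; ring
  have he2 : 2 * b = 2 / κ * σ (U t) := by rw [hbdef]; field_simp
  rwa [he1, he2] at hfin
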